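/- The inverse limit of an inverse system of compact Hausdorff spaces each of covering dimension at most d has covering dimension at most d. -/

import Mathlib

/-- The covering dimension of `X` is at most `n`: every finite open cover has an
open refinement of order at most `n + 1`. -/
def CovDimLE (X : Type*) [TopologicalSpace X] (n : ℕ) : Prop :=
  ∀ U : Finset (Set X), (∀ W ∈ U, IsOpen W) → ⋃₀ (U : Set (Set X)) = Set.univ →
    ∃ V : Set (Set X), (∀ W ∈ V, IsOpen W) ∧ ⋃₀ V = Set.univ ∧
      (∀ W ∈ V, ∃ W' ∈ U, W ⊆ W') ∧
      ∀ x : X, {W ∈ V | x ∈ W}.encard ≤ n + 1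

/-- The inverse limit of an inverse system of compact Hausdorff spaces of
covering dimension at most `d` has covering dimension at most `d`. -/
theorem stmt_17 {ι : Type*} [Preorder ι] [IsDirected ι (· ≤ ·)]
    (F : ι → Type*) [∀ i, TopologicalSpace (F i)] [∀ i, CompactSpace (F i)]
    [∀ i, T2Space (F i)]
    (p : ∀ i j, i ≤ j → F j → F i)
    (hcont : ∀ i j (h : i ≤ j), Continuous (p i j h))
    (hid : ∀ i (x : F i), p i i le_rfl x = x)
    (hcomp : ∀ i j k (hij : i ≤ j) (hjk : j ≤ k) (x : F k),
      p i j hij (p j k hjk x) = p i k (hij.trans hjk) x)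
    (d : ℕ) (hdim : ∀ i, CovDimLE (F i) d) :
    CovDimLE {x : ∀ i, F i // ∀ i j (h : i ≤ j), p i j h (x j) = x i} d := by
  classical
  set X := {x : ∀ i, F i // ∀ i j (h : i ≤ j), p i j h (x j) = x i} with hXdef
  intro U hUopen hUcover
  by_cases hXe : IsEmpty X
  · refine ⟨∅, by simp, ?_, by simp, by simp⟩
    rw [Set.sUnion_empty]
    exact (Set.univ_eq_empty_iff.mpr hXe).symm
  rw [not_isEmpty_iff] at hXe
  obtain ⟨x0⟩ := hXe
  have hx0U : x0 ∈ ⋃₀ (U : Set (Set X)) := hUcover ▸ Set.mem_univ x0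
  obtain ⟨W0, hW0U, hx0W0⟩ := hx0U
  by_cases hι : Nonempty ι
  case neg =>
    -- ι is empty, X is a subsingleton
    have hsub : ∀ x y : X, x = y := by
      intro x y
      apply Subtype.ext
      funext i
      exact absurd ⟨i⟩ hι
    refine ⟨{W0}, ?_, ?_, ?_, ?_⟩
    · intro W hW
      rw [Set.mem_singleton_iff] at hW
      exact hW ▸ hUopen W0 hW0U
    · apply Set.eq_univ_of_forall
      intro x
      exact ⟨W0, rfl, hsub x x0 ▸ hx0W0⟩
    · intro W hW
      rw [Set.mem_singleton_iff] at hW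
      exact ⟨W0, hW0U, hW ▸ subset_rfl⟩
    · intro x
      calc {W ∈ ({W0} : Set (Set X)) | x ∈ W}.encard
          ≤ ({W0} : Set (Set X)).encard := Set.encard_mono (Set.sep_subset _ _)
        _ = 1 := Set.encard_singleton _
        _ ≤ (d : ℕ∞) + 1 := le_add_self
  -- main case
  -- X is compact
  have hclosed : IsClosed {x : ∀ i, F i | ∀ i j (h : i ≤ j), p i j h (x j) = x i} := by
    have heq : {x : ∀ i, F i | ∀ i j (h : i ≤ j), p i j h (x j) = x i}
        = ⋂ (i) (j) (h : i ≤ j), {x : ∀ i, F i | p i j h (x j) = x i} := by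
      ext x; simp [Set.mem_iInter]
    rw [heq]
    exact isClosed_iInter fun i => isClosed_iInter fun j => isClosed_iInter fun h =>
      isClosed_eq ((hcont i j h).comp (continuous_apply j)) (continuous_apply i)
  haveI hcX : CompactSpace X := isCompact_iff_compactSpace.mp hclosed.isCompact
  -- basic neighborhoods
  have key : ∀ x : X, ∃ (i : ι) (V : Set (F i)) (W : Set X),
      W ∈ U ∧ IsOpen V ∧ x.1 i ∈ V ∧ ∀ y : X, y.1 i ∈ V → y ∈ W := by
    intro x
    have hxU : x ∈ ⋃₀ (U : Set (Set X)) := hUcover ▸ Set.mem_univ x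
    obtain ⟨W, hWU, hxW⟩ := hxU
    obtain ⟨O, hO, hOW⟩ := isOpen_induced_iff.mp (hUopen W hWU)
    have hxO : x.1 ∈ O := by rw [← hOW] at hxW; exact hxW
    obtain ⟨I, u, hu, hsub⟩ := isOpen_pi_iff.mp hO x.1 hxO
    obtain ⟨j, hj⟩ := I.exists_le
    refine ⟨j, ⋂ (i : {i // i ∈ I}), p i.1 j (hj i.1 i.2) ⁻¹' u i.1, W, hWU, ?_, ?_, ?_⟩
    · exact isOpen_iInter_of_finite fun i => (hu i.1 i.2).1.preimage (hcont _ _ _)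
    · refine Set.mem_iInter.mpr fun i => ?_
      show p i.1 j _ (x.1 j) ∈ u i.1
      rw [x.2 i.1 j (hj i.1 i.2)]
      exact (hu i.1 i.2).2
    · intro y hy
      have hyO : y.1 ∈ O := by
        apply hsub
        intro i hi
        have h2 := Set.mem_iInter.mp hy ⟨i, hi⟩
        rw [Set.mem_preimage] at h2
        rw [← y.2 i j (hj i hi)]
        exact h2
      show y ∈ W
      rw [← hOW]
      exact hyO
  choose idx Vs Ws hWU hVopen hxV himp using key
  -- finite subcover
  have hopen : ∀ x : X, IsOpen {y : X | y.1 (idx x) ∈ Vs x} :=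
    fun x => (hVopen x).preimage ((continuous_apply (idx x)).comp continuous_subtype_val)
  obtain ⟨t, ht⟩ := isCompact_univ.elim_finite_subcover
    (fun x : X => {y : X | y.1 (idx x) ∈ Vs x}) hopen
    (fun z _ => Set.mem_iUnion.mpr ⟨z, hxV z⟩)
  obtain ⟨j, hjle⟩ := (t.image idx).exists_le
  have hle : ∀ x ∈ t, idx x ≤ j := fun x hx => hjle _ (Finset.mem_image_of_mem idx hx)
  set π : X → F j := fun y => y.1 j with hπdef
  have hπ : Continuous π := (continuous_apply j).comp continuous_subtype_val
  have hRclosed : IsClosed (Set.range π) := (isCompact_range hπ).isClosed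
  set G : Finset (Set (F j)) :=
    (t.attach.image (fun x => p (idx x.1) j (hle x.1 x.2) ⁻¹' Vs x.1)) ∪ {(Set.range π)ᶜ}
    with hGdef
  have hGopen : ∀ S ∈ G, IsOpen S := by
    intro S hS
    rw [hGdef, Finset.mem_union] at hS
    rcases hS with hS | hS
    · obtain ⟨x, hx, rfl⟩ := Finset.mem_image.mp hS
      exact (hVopen x.1).preimage (hcont _ _ _)
    · rw [Finset.mem_singleton] at hS
      exact hS ▸ hRclosed.isOpen_compl
  have hGcover : ⋃₀ (G : Set (Set (F j))) = Set.univ := by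
    apply Set.eq_univ_of_forall
    intro y
    by_cases hy : y ∈ Set.range π
    · obtain ⟨z, rfl⟩ := hy
      have hz := ht (Set.mem_univ z)
      obtain ⟨x, hxmem⟩ := Set.mem_iUnion.mp hz
      simp only [Set.mem_iUnion] at hxmem
      obtain ⟨hxt, hzx⟩ := hxmem
      refine ⟨p (idx x) j (hle x hxt) ⁻¹' Vs x, ?_, ?_⟩
      · rw [hGdef]
        push_cast
        apply Set.mem_union_left
        exact ⟨⟨x, hxt⟩, Set.mem_univ _, rfl⟩
      · show p (idx x) j (hle x hxt) (z.1 j) ∈ Vs x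
        rw [z.2 (idx x) j (hle x hxt)]
        exact hzx
    · refine ⟨(Set.range π)ᶜ, ?_, hy⟩
      rw [hGdef]
      push_cast
      exact Set.mem_union_right _ rfl
  obtain ⟨V', hV'open, hV'cover, hV'ref, hV'ord⟩ := hdim j G hGopen hGcover
  refine ⟨(fun S => π ⁻¹' S) '' V', ?_, ?_, ?_, ?_⟩
  · rintro W ⟨S, hS, rfl⟩
    exact (hV'open S hS).preimage hπ
  · apply Set.eq_univ_of_forall
    intro x
    have : π x ∈ ⋃₀ V' := hV'cover ▸ Set.mem_univ _
    obtain ⟨S, hS, hxS⟩ := this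
    exact ⟨π ⁻¹' S, ⟨S, hS, rfl⟩, hxS⟩
  · rintro W ⟨S, hSV', rfl⟩
    obtain ⟨S', hS'G, hSS'⟩ := hV'ref S hSV'
    rw [hGdef, Finset.mem_union] at hS'G
    rcases hS'G with hS' | hS'
    · obtain ⟨x, hx, rfl⟩ := Finset.mem_image.mp hS'
      refine ⟨Ws x.1, hWU x.1, ?_⟩
      intro y hy
      apply himp x.1
      have h1 : p (idx x.1) j (hle x.1 x.2) (y.1 j) ∈ Vs x.1 := hSS' hy
      rw [y.2 (idx x.1) j (hle x.1 x.2)] at h1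
      exact h1
    · rw [Finset.mem_singleton] at hS'
      subst hS'
      refine ⟨W0, hW0U, ?_⟩
      intro y hy
      exact absurd ⟨y, rfl⟩ (hSS' hy)
  · intro x
    have hsubset : {W ∈ (fun S => π ⁻¹' S) '' V' | x ∈ W}
        ⊆ (fun S => π ⁻¹' S) '' {S ∈ V' | π x ∈ S} := by
      rintro W ⟨⟨S, hS, rfl⟩, hxW⟩
      exact ⟨S, ⟨hS, hxW⟩, rfl⟩
    calc {W ∈ (fun S => π ⁻¹' S) '' V' | x ∈ W}.encard
        ≤ ((fun S => π ⁻¹' S) '' {S ∈ V' | π x ∈ S}).encard := Set.encard_mono hsubset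
      _ ≤ {S ∈ V' | π x ∈ S}.encard := Set.encard_image_le _ _
      _ ≤ d + 1 := hV'ord (π x)
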